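/- For every binary groupoid A and every n ≥ 2: if all bracketings with n occurrences of the operation induce the same term function on A, then for every m ≥ n, all bracketings with m occurrences induce the same term function (final associativity). -/

import Mathlib

/-- p-ary bracketings: terms over one variable `x` with one p-ary operation symbol `ω`. -/
inductive Brack (p : ℕ) : Type
  | x : Brack p
  | node : (Fin p → Brack p) → Brack p

namespace Brack

/-- occurrence number: number of occurrences of ω -/
def occ {p : ℕ} : Brack p → ℕ
  | .x => 0
  | .node f => 1 + ∑ i, occ (f i)

/-- length: number of occurrences of x -/
def len {p : ℕ} : Brack p → ℕ
  | .x => 1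
  | .node f => ∑ i, len (f i)

/-- evaluation of a bracketing in a groupoid, variables enumerated left-to-right
starting at position `j`. -/
def evalFrom {p : ℕ} {A : Type*} (op : (Fin p → A) → A) (v : ℕ → A) :
    Brack p → ℕ → A
  | .x, j => v j
  | .node f, j =>
      op (fun i => evalFrom op v (f i)
        (j + ∑ k ∈ Finset.univ.filter (· < i), len (f k)))

/-- the term function induced by a bracketing -/
def eval {p : ℕ} {A : Type*} (op : (Fin p → A) → A) (t : Brack p) (v : ℕ → A) : A :=
  evalFrom op v t 0

/-- prefix word of a bracketing: `true` codes ω, `false` codes x -/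
def word {p : ℕ} : Brack p → List Bool
  | .x => [false]
  | .node f => true :: (List.ofFn (fun i => word (f i))).flatten

/-- auxiliary: scan a word, recording 1 + number of x's before each ω -/
def STaux : List Bool → ℕ → List ℕ
  | [], _ => []
  | true :: w, c => (c + 1) :: STaux w c
  | false :: w, c => STaux w (c + 1)

/-- insertion tuple of a bracketing: the i-th entry is one plus the number
of x's preceding the i-th occurrence of ω in the prefix notation -/
def ST {p : ℕ} (t : Brack p) : List ℕ := STaux (word t) 0

/-- replace the i-th (0-based) occurrence of x in `t` by `s` -/
def replaceLeaf {p : ℕ} : Brack p → ℕ → Brack p → Brack p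
  | .x, i, s => if i = 0 then s else .x
  | .node f, i, s => .node (fun j =>
      let off := ∑ k ∈ Finset.univ.filter (· < j), len (f k)
      if off ≤ i ∧ i < off + len (f j) then replaceLeaf (f j) (i - off) s else f j)

/-- β_i : insertion of ω x … x at the i-th (1-based) occurrence of x -/
def beta {p : ℕ} (i : ℕ) (t : Brack p) : Brack p :=
  replaceLeaf t (i - 1) (.node (fun _ => .x))

/-- left depth: depth of leftmost leaf (binary case) -/
def dl : Brack 2 → ℕ
  | .x => 0
  | .node f => dl (f 0) + 1

/-- right depth: depth of rightmost leaf (binary case) -/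
def dr : Brack 2 → ℕ
  | .x => 0
  | .node f => dr (f 1) + 1

/-- left factor of a binary bracketing -/
def leftF : Brack 2 → Brack 2
  | .x => .x
  | .node f => f 0

/-- whether a bracketing is the single variable x -/
def isX {p : ℕ} : Brack p → Bool
  | .x => true
  | .node _ => false

/-- number of pairs of eggs, i.e. subterm occurrences of ω x x (binary case) -/
def eggs : Brack 2 → ℕ
  | .x => 0
  | .node f => (if isX (f 0) && isX (f 1) then 1 else 0) + eggs (f 0) + eggs (f 1)

end Brack

/-- generalized Catalan numbers -/
def genCat (p : ℕ) : ℕ → ℕ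
  | 0 => 1
  | n + 1 =>
      ∑ v ∈ (Finset.Nat.antidiagonalTuple p n).attach, ∏ k : Fin p, genCat p (v.1 k)
  decreasing_by
    have hv := Finset.Nat.mem_antidiagonalTuple.mp v.2
    have hle : v.1 k ≤ n := by
      calc v.1 k ≤ ∑ i, v.1 i :=
            Finset.single_le_sum (fun i _ => Nat.zero_le _) (Finset.mem_univ k)
        _ = n := hv
    omega

/-- the set M(n,k,p) of weakly increasing n-tuples of positive integers
with u_i ≤ (p-1)(i-1)+k (here indices are 0-based) -/
def Mset (n k p : ℕ) : Set (Fin n → ℕ) :=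
  {u | (∀ i : Fin n, 1 ≤ u i ∧ u i ≤ (p - 1) * (i : ℕ) + k) ∧
    ∀ i j : Fin n, i ≤ j → u i ≤ u j}

namespace BrackAux

open Brack

variable {A : Type*} (op : (Fin 2 → A) → A)

lemma occ_node (f : Fin 2 → Brack 2) :
    occ (.node f) = 1 + (occ (f 0) + occ (f 1)) := by
  show 1 + _ = _
  rw [Fin.sum_univ_two]

lemma len_node (f : Fin 2 → Brack 2) :
    len (.node f) = len (f 0) + len (f 1) := by
  show (∑ i, len (f i)) = _
  rw [Fin.sum_univ_two]

lemma len_eq (t : Brack 2) : t.len = t.occ + 1 := by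
  induction t with
  | x => rfl
  | node f ih =>
    rw [len_node, occ_node, ih 0, ih 1]; ring

lemma dr_le_occ (t : Brack 2) : t.dr ≤ t.occ := by
  induction t with
  | x => exact le_refl 0
  | node f ih =>
    show dr (f 1) + 1 ≤ _
    rw [occ_node]
    have := ih 1
    omega

lemma filt0 : (Finset.univ.filter (· < (0:Fin 2))) = ∅ := by decide
lemma filt1 : (Finset.univ.filter (· < (1:Fin 2))) = {0} := by decide

lemma evalFrom_node (v : ℕ → A) (f : Fin 2 → Brack 2) (j : ℕ) :
    evalFrom op v (.node f) j =
      op ![evalFrom op v (f 0) j, evalFrom op v (f 1) (j + len (f 0))] := by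
  show op _ = _
  congr 1
  funext i
  fin_cases i
  · simp [filt0]
  · simp [filt1, Finset.filter_eq']

lemma evalFrom_congr (t : Brack 2) {v w : ℕ → A} {j j' : ℕ}
    (hvw : ∀ i < t.len, v (j + i) = w (j' + i)) :
    evalFrom op v t j = evalFrom op w t j' := by
  induction t generalizing j j' with
  | x =>
    have := hvw 0 (by simp [len])
    simpa [evalFrom] using this
  | node f ih =>
    rw [evalFrom_node, evalFrom_node]
    have h1 : len (f 1) ≥ 1 := by rw [len_eq]; omega
    congr 1
    funext i
    fin_cases i
    · simp only [Matrix.cons_val_zero]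
      exact ih 0 (fun i hi => hvw i (by rw [len_node]; omega))
    · simp only [Matrix.cons_val_one, Matrix.head_cons]
      refine ih 1 (fun i hi => ?_)
      have := hvw (len (f 0) + i) (by rw [len_node]; omega)
      rw [← add_assoc, ← add_assoc] at this
      exact this

lemma evalFrom_shift (t : Brack 2) (v : ℕ → A) (j : ℕ) :
    evalFrom op v t j = eval op t (fun i => v (j + i)) := by
  refine evalFrom_congr op t (fun i hi => ?_)
  simp

/-- substitution of trees for the leaves of `t`, leaves numbered left to right -/
def subst : Brack 2 → (ℕ → Brack 2) → Brack 2
  | .x, σ => σ 0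
  | .node f, σ => .node ![subst (f 0) σ, subst (f 1) (fun j => σ (j + len (f 0)))]

lemma sum_range_add' (g : ℕ → ℕ) (a b : ℕ) :
    ∑ i ∈ Finset.range (a + b), g i =
      (∑ i ∈ Finset.range a, g i) + ∑ i ∈ Finset.range b, g (a + i) := by
  induction b with
  | zero => simp
  | succ b ih =>
    rw [Nat.add_succ, Finset.sum_range_succ, Finset.sum_range_succ, ih]
    ring

lemma len_subst (t : Brack 2) (σ : ℕ → Brack 2) :
    (subst t σ).len = ∑ i ∈ Finset.range t.len, (σ i).len := by
  induction t generalizing σ with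
  | x => simp [subst, len]
  | node f ih =>
    rw [subst, len_node, len_node]
    simp only [Matrix.cons_val_zero, Matrix.cons_val_one, Matrix.head_cons]
    rw [ih 0, ih 1, sum_range_add']
    congr 1
    exact Finset.sum_congr rfl (fun i _ => by rw [add_comm i (len (f 0))])

lemma occ_subst (t : Brack 2) (σ : ℕ → Brack 2) :
    (subst t σ).occ = t.occ + ∑ i ∈ Finset.range t.len, (σ i).occ := by
  induction t generalizing σ with
  | x => simp [subst, occ, len]
  | node f ih =>
    rw [subst, occ_node, occ_node, len_node]
    simp only [Matrix.cons_val_zero, Matrix.cons_val_one, Matrix.head_cons]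
    rw [ih 0, ih 1, sum_range_add' (fun i => (σ i).occ)]
    have : ∑ i ∈ Finset.range (len (f 1)), (σ (i + len (f 0))).occ
        = ∑ i ∈ Finset.range (len (f 1)), (σ (len (f 0) + i)).occ :=
      Finset.sum_congr rfl (fun i _ => by rw [add_comm i (len (f 0))])
    rw [this]; ring

lemma subst_congr (t : Brack 2) {σ σ' : ℕ → Brack 2}
    (hσ : ∀ i < t.len, σ i = σ' i) : subst t σ = subst t σ' := by
  induction t generalizing σ σ' with
  | x => exact hσ 0 (by simp [len])
  | node f ih =>
    have h1 : len (f 1) ≥ 1 := by rw [len_eq]; omega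
    rw [subst, subst]
    congr 1
    funext i
    fin_cases i
    · exact ih 0 (fun i hi => hσ i (by rw [len_node]; omega))
    · simp only [Matrix.cons_val_one, Matrix.head_cons]
      exact ih 1 (fun i hi => hσ (i + len (f 0)) (by rw [len_node]; omega))

lemma eval_subst (t : Brack 2) (σ : ℕ → Brack 2) (v : ℕ → A) (j : ℕ) :
    evalFrom op v (subst t σ) j =
      evalFrom op
        (fun i => evalFrom op v (σ i) (j + ∑ k ∈ Finset.range i, (σ k).len))
        t 0 := by
  induction t generalizing σ j with
  | x => simp [subst, evalFrom]
  | node f ih =>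
    set w : ℕ → A := fun i => evalFrom op v (σ i) (j + ∑ k ∈ Finset.range i, (σ k).len)
      with hw
    rw [subst, evalFrom_node, evalFrom_node]
    simp only [Matrix.cons_val_zero, Matrix.cons_val_one, Matrix.head_cons]
    congr 1
    funext i
    fin_cases i
    · simpa using ih 0 σ j
    · simp only [Matrix.cons_val_one, Matrix.head_cons]
      rw [ih 1, len_subst]
      refine Eq.trans ?_ (evalFrom_congr op (f 1) (fun i _ => rfl)).symm
      refine evalFrom_congr op (f 1) (fun i _ => ?_)
      simp only [zero_add, hw]
      have : (∑ k ∈ Finset.range (len (f 0)), (σ k).len)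
            + ∑ k ∈ Finset.range i, (σ (k + len (f 0))).len
          = ∑ k ∈ Finset.range (len (f 0) + i), (σ k).len := by
        rw [sum_range_add' (fun k => (σ k).len)]
        congr 1
        exact Finset.sum_congr rfl (fun k _ => by rw [add_comm k (len (f 0))])
      rw [add_comm i (len (f 0))]
      congr 1
      omega

lemma eval_subst_congr (s s' : Brack 2)
    (hs : ∀ v : ℕ → A, eval op s v = eval op s' v) (σ : ℕ → Brack 2) (v : ℕ → A) :
    eval op (subst s σ) v = eval op (subst s' σ) v := by
  unfold eval
  rw [eval_subst, eval_subst]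
  exact hs _

/-- left comb with k operation occurrences -/
def Lcomb : ℕ → Brack 2
  | 0 => .x
  | k + 1 => .node ![Lcomb k, .x]

lemma occ_Lcomb (k : ℕ) : (Lcomb k).occ = k := by
  induction k with
  | zero => rfl
  | succ k ih =>
    show occ (.node ![Lcomb k, .x]) = k + 1
    rw [occ_node]
    simp only [Matrix.cons_val_zero, Matrix.cons_val_one, Matrix.head_cons, ih]
    show 1 + (k + 0) = k + 1
    omega

lemma dr_Lcomb (k : ℕ) : (Lcomb (k + 1)).dr = 1 := by
  show dr (.node ![Lcomb k, .x]) = 1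
  show dr ((![Lcomb k, Brack.x] : Fin 2 → Brack 2) 1) + 1 = 1
  simp only [Matrix.cons_val_one, Matrix.head_cons]
  rfl

lemma cutD (t : Brack 2) : ∀ a ≤ t.occ, ∃ s σ, occ s = a ∧ subst s σ = t := by
  induction t with
  | x =>
    intro a ha
    have ha0 : a = 0 := Nat.le_zero.mp ha
    subst ha0
    exact ⟨.x, fun _ => .x, rfl, rfl⟩
  | node f ih =>
    intro a ha
    match a with
    | 0 => exact ⟨.x, fun _ => .node f, rfl, rfl⟩
    | a + 1 =>
      rw [occ_node] at ha
      set a0 := min a (occ (f 0)) with ha0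
      set a1 := a - a0 with ha1
      have h0 : a0 ≤ occ (f 0) := min_le_right _ _
      have h1 : a1 ≤ occ (f 1) := by omega
      obtain ⟨s0, σ0, hs0, hsub0⟩ := ih 0 a0 h0
      obtain ⟨s1, σ1, hs1, hsub1⟩ := ih 1 a1 h1
      refine ⟨.node ![s0, s1],
        fun i => if i < s0.len then σ0 i else σ1 (i - s0.len), ?_, ?_⟩
      · rw [occ_node]
        simp only [Matrix.cons_val_zero, Matrix.cons_val_one, Matrix.head_cons, hs0, hs1]
        omega
      · rw [subst]
        simp only [Matrix.cons_val_zero, Matrix.cons_val_one, Matrix.head_cons]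
        have e0 : subst s0 (fun i => if i < s0.len then σ0 i else σ1 (i - s0.len)) = f 0 := by
          rw [subst_congr s0 (σ' := σ0) (fun i hi => by simp [hi])]
          exact hsub0
        have e1 : subst s1 (fun j =>
            if j + s0.len < s0.len then σ0 (j + s0.len) else σ1 (j + s0.len - s0.len)) = f 1 := by
          rw [subst_congr s1 (σ' := σ1) (fun i hi => by
            have : ¬ (i + s0.len < s0.len) := by omega
            simp [this])]
          exact hsub1
        rw [e0]; erw [e1]
        congr 1
        funext i
        fin_cases i <;> rfl

lemma cutC (t : Brack 2) : ∀ a, t.dr ≤ a → a ≤ t.occ →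
    ∃ s σ, occ s = a ∧ subst s σ = t ∧ σ a = .x := by
  induction t with
  | x =>
    intro a _ ha
    have ha0 : a = 0 := Nat.le_zero.mp ha
    subst ha0
    exact ⟨.x, fun _ => .x, rfl, rfl, rfl⟩
  | node f ih =>
    intro a hdr ha
    have hdrf : dr (f 1) + 1 ≤ a := hdr
    rw [occ_node] at ha
    have hd1 : dr (f 1) ≤ occ (f 1) := dr_le_occ _
    set b := max (dr (f 1)) (a - 1 - occ (f 0)) with hb
    set a0 := a - 1 - b with ha0d
    have hb1 : b ≤ occ (f 1) := by omega
    have hb2 : dr (f 1) ≤ b := le_max_left _ _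
    have ha0 : a0 ≤ occ (f 0) := by omega
    have hsum : a0 + b = a - 1 := by omega
    obtain ⟨s0, σ0, hs0, hsub0⟩ := cutD (f 0) a0 ha0
    obtain ⟨s1, σ1, hs1, hsub1, hx1⟩ := ih 1 b hb2 hb1
    have hlen0 : s0.len = a0 + 1 := by rw [len_eq, hs0]
    refine ⟨.node ![s0, s1],
      fun i => if i < s0.len then σ0 i else σ1 (i - s0.len), ?_, ?_, ?_⟩
    · rw [occ_node]
      simp only [Matrix.cons_val_zero, Matrix.cons_val_one, Matrix.head_cons, hs0, hs1]
      omega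
    · rw [subst]
      simp only [Matrix.cons_val_zero, Matrix.cons_val_one, Matrix.head_cons]
      have e0 : subst s0 (fun i => if i < s0.len then σ0 i else σ1 (i - s0.len)) = f 0 := by
        rw [subst_congr s0 (σ' := σ0) (fun i hi => by simp [hi])]
        exact hsub0
      have e1 : subst s1 (fun j =>
          if j + s0.len < s0.len then σ0 (j + s0.len) else σ1 (j + s0.len - s0.len)) = f 1 := by
        rw [subst_congr s1 (σ' := σ1) (fun i hi => by
          have : ¬ (i + s0.len < s0.len) := by omega
          simp [this])]
        exact hsub1
      rw [e0]; erw [e1]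
      congr 1
      funext i
      fin_cases i <;> rfl
    · have hnlt : ¬ (a < s0.len) := by omega
      simp only [hnlt, if_false]
      have : a - s0.len = b := by omega
      rw [this, hx1]

lemma eval_node_congr (t0 t1 t0' t1' : Brack 2)
    (h0 : ∀ v : ℕ → A, eval op t0 v = eval op t0' v)
    (h1 : ∀ v : ℕ → A, eval op t1 v = eval op t1' v)
    (hl : t0.len = t0'.len) (v : ℕ → A) :
    eval op (.node ![t0, t1]) v = eval op (.node ![t0', t1']) v := by
  show evalFrom op v _ 0 = evalFrom op v _ 0
  rw [evalFrom_node, evalFrom_node]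
  congr 1
  funext i
  fin_cases i
  · simp only [Matrix.cons_val_zero]
    exact h0 v
  · simp only [Matrix.cons_val_zero, Matrix.cons_val_one, Matrix.head_cons]
    rw [evalFrom_shift op t1, evalFrom_shift op t1', hl]
    exact h1 _

lemma main (n : ℕ) (hn : 2 ≤ n)
    (h : ∀ s t : Brack 2, Brack.occ s = n → Brack.occ t = n →
      ∀ v : ℕ → A, Brack.eval op s v = Brack.eval op t v) :
    ∀ m, n ≤ m → ∀ t : Brack 2, t.occ = m → ∀ v : ℕ → A,
      eval op t v = eval op (Lcomb m) v := by
  intro m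
  induction m using Nat.strong_induction_on with
  | _ m ih =>
  intro hm t ht v
  rcases eq_or_lt_of_le hm with heq | hlt
  · subst heq
    exact h t (Lcomb n) ht (occ_Lcomb n) v
  -- n < m
  have hm1 : n ≤ m - 1 := by omega
  have claim1 : ∀ t : Brack 2, t.occ = m → t.dr ≤ n → ∀ v : ℕ → A,
      eval op t v = eval op (Lcomb m) v := by
    intro t ht hdr v
    obtain ⟨s, σ, hs, hsub, hσ⟩ := cutC t n hdr (by omega)
    have e1 : eval op t v = eval op (subst (Lcomb n) σ) v := by
      rw [← hsub]
      exact eval_subst_congr op s (Lcomb n)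
        (fun v => h s (Lcomb n) hs (occ_Lcomb n) v) σ v
    obtain ⟨n', rfl⟩ : ∃ n', n = n' + 1 := ⟨n - 1, by omega⟩
    have hLn : Lcomb (n' + 1) = .node ![Lcomb n', .x] := rfl
    have hlenLn' : (Lcomb n').len = n' + 1 := by rw [len_eq, occ_Lcomb]
    have e2 : subst (Lcomb (n' + 1)) σ
        = .node ![subst (Lcomb n') σ, σ (n' + 1)] := by
      rw [hLn, subst]
      simp only [Matrix.cons_val_zero, Matrix.cons_val_one, Matrix.head_cons]
      congr 1
      funext i
      fin_cases i
      · rfl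
      · show subst .x (fun j => σ (j + (Lcomb n').len)) = σ (n' + 1)
        rw [subst, zero_add, hlenLn']
    rw [hσ] at e2
    -- occurrence counts
    have hocc_all : (subst (Lcomb (n' + 1)) σ).occ = m := by
      rw [occ_subst, occ_Lcomb]
      rw [← hsub, occ_subst, hs] at ht
      have hlens : s.len = (Lcomb (n' + 1)).len := by
        rw [len_eq, len_eq, hs, occ_Lcomb]
      rw [← hlens]
      omega
    have hocc_t' : (subst (Lcomb n') σ).occ = m - 1 := by
      rw [e2, occ_node] at hocc_all
      simp only [Matrix.cons_val_zero, Matrix.cons_val_one, Matrix.head_cons] at hocc_all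
      have : occ (Brack.x : Brack 2) = 0 := rfl
      omega
    have e3 : ∀ v : ℕ → A, eval op (subst (Lcomb n') σ) v = eval op (Lcomb (m - 1)) v :=
      ih (m - 1) (by omega) hm1 _ hocc_t'
    have e4 : eval op (.node ![subst (Lcomb n') σ, .x]) v
        = eval op (.node ![Lcomb (m - 1), .x]) v := by
      refine eval_node_congr op _ _ _ _ e3 (fun _ => rfl) ?_ v
      rw [len_eq, len_eq, hocc_t', occ_Lcomb]
    have hLm : Lcomb m = .node ![Lcomb (m - 1), .x] := by
      obtain ⟨m', rfl⟩ : ∃ m', m = m' + 1 := ⟨m - 1, by omega⟩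
      rfl
    rw [e1, e2, e4, hLm]
  by_cases hdr : t.dr ≤ n
  · exact claim1 t ht hdr v
  · push_neg at hdr
    match t, ht with
    | .node f, ht =>
      have hdrf : dr (f 1) + 1 = dr (.node f) := rfl
      have hk : n ≤ occ (f 1) := le_trans (by omega : n ≤ dr (f 1)) (dr_le_occ _)
      rw [occ_node] at ht
      have hklt : occ (f 1) < m := by omega
      have e5 : ∀ v : ℕ → A, eval op (f 1) v = eval op (Lcomb (occ (f 1))) v :=
        ih (occ (f 1)) hklt hk _ rfl
      have hfeta : (.node f : Brack 2) = .node ![f 0, f 1] := by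
        congr 1
        funext i
        fin_cases i <;> rfl
      have e6 : eval op (.node f) v = eval op (.node ![f 0, Lcomb (occ (f 1))]) v := by
        rw [hfeta]
        exact eval_node_congr op _ _ _ _ (fun _ => rfl) e5 rfl v
      obtain ⟨k', hk'⟩ : ∃ k', occ (f 1) = k' + 1 := ⟨occ (f 1) - 1, by omega⟩
      have hdr2 : (Brack.node ![f 0, Lcomb (occ (f 1))]).dr ≤ n := by
        show dr ((![f 0, Lcomb (occ (f 1))] : Fin 2 → Brack 2) 1) + 1 ≤ n
        simp only [Matrix.cons_val_one, Matrix.head_cons, Matrix.cons_val_zero]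
        rw [hk', dr_Lcomb]
        omega
      have hocc2 : (Brack.node ![f 0, Lcomb (occ (f 1))]).occ = m := by
        rw [occ_node]
        simp only [Matrix.cons_val_zero, Matrix.cons_val_one, Matrix.head_cons, occ_Lcomb]
        omega
      rw [e6]
      exact claim1 _ hocc2 hdr2 v

end BrackAux

theorem stmt_13 (A : Type*) (op : (Fin 2 → A) → A) (n : ℕ) (hn : 2 ≤ n)
    (h : ∀ s t : Brack 2, Brack.occ s = n → Brack.occ t = n →
      ∀ v : ℕ → A, Brack.eval op s v = Brack.eval op t v) :
    ∀ (m : ℕ), n ≤ m → ∀ s t : Brack 2, Brack.occ s = m → Brack.occ t = m →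
      ∀ v : ℕ → A, Brack.eval op s v = Brack.eval op t v := by
  intro m hm s t hs ht v
  rw [BrackAux.main op n hn h m hm s hs v, BrackAux.main op n hn h m hm t ht v]
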